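/- Fix r ∈ {1,…,K} and a K×K invertible matrix G. Let Λ ∈ ℝ^{J×K}, and suppose there is an index set A ⊆ {1,…,J} with |A| = K−1 such that Λ_{[A, r]} = 0 and the (K−1)×(K−1) submatrix Λ_{[A, −r]} (rows A, all columns except r) has rank K−1. If (Λ G)_{[A, r]} = 0 as well, then the r-th column of G is a scalar multiple of the r-th standard basis vector e_r, i.e., G_{[,r]} = c·e_r for some c ∈ ℝ, c ≠ 0. -/
import Mathlib


open Matrix

theorem stmt_12 {J K : ℕ} (r : Fin K) (G : Matrix (Fin K) (Fin K) ℝ)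
    (hG : IsUnit G) (Λ : Matrix (Fin J) (Fin K) ℝ) (A : Finset (Fin J))
    (hcard : A.card = K - 1)
    (hzero : ∀ j ∈ A, Λ j r = 0)
    (hrank : (Λ.submatrix (fun a : A => (a : Fin J))
        (fun s : {s : Fin K // s ≠ r} => (s : Fin K))).rank = K - 1)
    (hzero' : ∀ j ∈ A, (Λ * G) j r = 0) :
    ∃ c : ℝ, c ≠ 0 ∧ ∀ i : Fin K, G i r = c * (Pi.single r 1 : Fin K → ℝ) i := by
  classical
  set M := Λ.submatrix (fun a : A => (a : Fin J))
      (fun s : {s : Fin K // s ≠ r} => (s : Fin K)) with hM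
  -- cardinality of column index type
  have hcardcol : Fintype.card {s : Fin K // s ≠ r} = K - 1 := by
    simp [Fintype.card_subtype_compl]
  -- kernel of mulVecLin is trivial
  have hker : LinearMap.ker M.mulVecLin = ⊥ := by
    have h1 : Module.finrank ℝ (LinearMap.range M.mulVecLin)
        + Module.finrank ℝ (LinearMap.ker M.mulVecLin)
        = Fintype.card {s : Fin K // s ≠ r} := by
      rw [LinearMap.finrank_range_add_finrank_ker M.mulVecLin]
      simp [Module.finrank_fintype_fun_eq_card]
    have h2 : Module.finrank ℝ (LinearMap.range M.mulVecLin) = K - 1 := hrank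
    rw [h2, hcardcol] at h1
    have h3 : Module.finrank ℝ (LinearMap.ker M.mulVecLin) = 0 := by omega
    exact Submodule.finrank_eq_zero.mp h3
  -- the vector of off-r entries of column r of G is killed by M
  have hv : M.mulVec (fun s : {s : Fin K // s ≠ r} => G (s : Fin K) r) = 0 := by
    funext a
    have h := hzero' a a.2
    rw [Matrix.mul_apply] at h
    have hsplit : ∑ k : Fin K, Λ (a : Fin J) k * G k r
        = Λ (a : Fin J) r * G r r
          + ∑ s : {s : Fin K // s ≠ r}, Λ (a : Fin J) (s : Fin K) * G (s : Fin K) r := by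
      rw [Fintype.sum_eq_add_sum_compl r]
      congr 1
      exact (Finset.sum_subtype _ (by simp) _)
    rw [hsplit, hzero a a.2, zero_mul, zero_add] at h
    simpa [M, Matrix.mulVec, dotProduct] using h
  have hv0 : ∀ s : Fin K, s ≠ r → G s r = 0 := by
    intro s hs
    have := LinearMap.mem_ker.mpr (show M.mulVecLin
        (fun s : {s : Fin K // s ≠ r} => G (s : Fin K) r) = 0 from hv)
    rw [hker, Submodule.mem_bot] at this
    exact congrFun this ⟨s, hs⟩
  refine ⟨G r r, ?_, ?_⟩
  · -- if G r r = 0 then column r of G is zero, contradicting invertibility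
    intro h0
    have hcol : G *ᵥ (Pi.single r 1 : Fin K → ℝ) = 0 := by
      funext i
      simp only [Matrix.mulVec_single, Pi.zero_apply]
      rcases eq_or_ne i r with rfl | hi
      · simpa using h0
      · simpa using hv0 i hi
    have hinj : Function.Injective G.mulVec := mulVec_injective_iff_isUnit.mpr hG
    have : (Pi.single r 1 : Fin K → ℝ) = 0 := by
      apply hinj; simpa [Matrix.mulVec_zero] using hcol
    have := congrFun this r
    simp at this
  · intro i
    rcases eq_or_ne i r with rfl | hi
    · simp
    · simp [hv0 i hi, Pi.single_eq_of_ne hi]
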